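/- There exists N such that for all natural numbers m ≥ N, (Finset.range (2*m+1)).sum (fun j => ((2*m).choose j)^2 * (Finset.range (j+1)).sum (fun i => (j.choose i) * ((4*m−j).choose (2*m−i)) * ((4*m−i).choose (2*m)))) ≤ (0.74 : ℝ)^m * ((4*m).choose (2*m))^3. -/

import Mathlib

open Finset Filter

/-- Chernoff-type bound for binomial coefficients. -/
lemma choose_chernoff (u : ℝ) (hu : 0 < u) (n k : ℕ) :
    (n.choose k : ℝ) * u ^ k ≤ (1 + u) ^ n := by
  rcases le_or_gt k n with h | h
  · have hexp : (u + 1 : ℝ) ^ n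
        = ∑ i ∈ range (n + 1), u ^ i * 1 ^ (n - i) * (n.choose i : ℝ) := add_pow u 1 n
    have hmem : k ∈ range (n + 1) := mem_range.mpr (Nat.lt_succ_of_le h)
    calc (n.choose k : ℝ) * u ^ k = u ^ k * 1 ^ (n - k) * (n.choose k : ℝ) := by ring
      _ ≤ ∑ i ∈ range (n + 1), u ^ i * 1 ^ (n - i) * (n.choose i : ℝ) :=
          Finset.single_le_sum (f := fun i => u ^ i * 1 ^ (n - i) * (n.choose i : ℝ))
            (fun i _ => by positivity) hmem
      _ = (u + 1) ^ n := hexp.symm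
      _ = (1 + u) ^ n := by ring
  · rw [Nat.choose_eq_zero_of_lt h]
    simp only [Nat.cast_zero, zero_mul]
    positivity

/-- Per-term bound: each summand is at most `g ^ m`. -/
lemma term_le_g_pow (m j i : ℕ) (hj : j ≤ 2 * m) (hi : i ≤ j) :
    ((2 * m).choose j : ℝ) ^ 2 *
      ((j.choose i : ℝ) * (((4 * m - j).choose (2 * m - i)) : ℝ) *
        (((4 * m - i).choose (2 * m)) : ℝ))
      ≤ ((1 + 21/25 : ℝ) ^ 4 * (1 + 119/100) ^ 8 / (119/100) ^ 4) ^ m := by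
  have ha := choose_chernoff (21/25) (by norm_num) (2 * m) j
  have hb := choose_chernoff (109/200) (by norm_num) j i
  have hc := choose_chernoff (119/100) (by norm_num) (4 * m - j) (2 * m - i)
  have hd := choose_chernoff (119/100) (by norm_num) (4 * m - i) (2 * m)
  -- product of the four bounds
  have hprod :
      (((2 * m).choose j : ℝ) * (21/25) ^ j) * (((2 * m).choose j : ℝ) * (21/25) ^ j)
        * ((j.choose i : ℝ) * (109/200) ^ i)
        * ((((4 * m - j).choose (2 * m - i)) : ℝ) * (119/100) ^ (2 * m - i))
        * ((((4 * m - i).choose (2 * m)) : ℝ) * (119/100) ^ (2 * m))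
      ≤ (1 + 21/25 : ℝ) ^ (2 * m) * (1 + 21/25) ^ (2 * m) * (1 + 109/200) ^ j
        * (1 + 119/100) ^ (4 * m - j) * (1 + 119/100) ^ (4 * m - i) := by
    apply mul_le_mul _ hd (by positivity) (by positivity)
    apply mul_le_mul _ hc (by positivity) (by positivity)
    apply mul_le_mul _ hb (by positivity) (by positivity)
    exact mul_le_mul ha ha (by positivity) (by positivity)
  -- small rational facts giving the tilt conditions
  have small : (1 + 109/200 : ℝ) ^ j * (119/100) ^ i
      ≤ ((1 + 119/100 : ℝ) * ((21/25) * (21/25))) ^ j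
        * ((1 + 119/100 : ℝ) * (109/200)) ^ i := by
    apply mul_le_mul
    · exact pow_le_pow_left₀ (by norm_num) (by norm_num) j
    · exact pow_le_pow_left₀ (by norm_num) (by norm_num) i
    · positivity
    · positivity
  have small' : (1 + 109/200 : ℝ) ^ j * (119/100) ^ i
      ≤ (1 + 119/100 : ℝ) ^ j * (21/25) ^ j * (21/25) ^ j
        * ((1 + 119/100) ^ i * (109/200) ^ i) := by
    refine small.trans (le_of_eq ?_)
    rw [mul_pow, mul_pow, mul_pow]
    ring
  have key2 :
      (1 + 21/25 : ℝ) ^ (2 * m) * (1 + 21/25) ^ (2 * m) * (1 + 109/200) ^ j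
        * (1 + 119/100) ^ (4 * m - j) * (1 + 119/100) ^ (4 * m - i)
      ≤ ((1 + 21/25 : ℝ) ^ 4 * (1 + 119/100) ^ 8 / (119/100) ^ 4) ^ m
        * ((21/25) ^ j * (21/25) ^ j * (109/200) ^ i
            * (119/100) ^ (2 * m - i) * (119/100) ^ (2 * m)) := by
    have hgm : ((1 + 21/25 : ℝ) ^ 4 * (1 + 119/100) ^ 8 / (119/100) ^ 4) ^ m
        = (1 + 21/25 : ℝ) ^ (4 * m) * (1 + 119/100) ^ (8 * m) / (119/100) ^ (4 * m) := by
      rw [div_pow, mul_pow, ← pow_mul, ← pow_mul, ← pow_mul]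
    rw [hgm, div_mul_eq_mul_div, le_div_iff₀ (by positivity)]
    have eA : (1 + 21/25 : ℝ) ^ (4 * m)
        = (1 + 21/25 : ℝ) ^ (2 * m) * (1 + 21/25) ^ (2 * m) := by
      rw [← pow_add]; congr 1; omega
    have eW : (1 + 119/100 : ℝ) ^ (8 * m)
        = (1 + 119/100 : ℝ) ^ (4 * m - j) * (1 + 119/100) ^ (4 * m - i)
          * (1 + 119/100) ^ j * (1 + 119/100) ^ i := by
      rw [← pow_add, ← pow_add, ← pow_add]; congr 1; omega
    have ew : (119/100 : ℝ) ^ (4 * m)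
        = (119/100 : ℝ) ^ (2 * m - i) * (119/100) ^ (2 * m) * (119/100) ^ i := by
      rw [← pow_add, ← pow_add]; congr 1; omega
    rw [eA, eW, ew]
    have cleared := mul_le_mul_of_nonneg_left small'
      (show (0:ℝ) ≤ (1 + 21/25 : ℝ) ^ (2 * m) * (1 + 21/25) ^ (2 * m)
          * (1 + 119/100) ^ (4 * m - j) * (1 + 119/100) ^ (4 * m - i)
          * (119/100) ^ (2 * m - i) * (119/100) ^ (2 * m) by positivity)
    ring_nf at cleared ⊢
    linarith [cleared]
  -- combine
  have hD : (0:ℝ) < (21/25 : ℝ) ^ j * (21/25) ^ j * (109/200) ^ i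
      * (119/100) ^ (2 * m - i) * (119/100) ^ (2 * m) := by positivity
  have hfin : (((2 * m).choose j : ℝ) ^ 2 *
      ((j.choose i : ℝ) * (((4 * m - j).choose (2 * m - i)) : ℝ) *
        (((4 * m - i).choose (2 * m)) : ℝ)))
      * ((21/25 : ℝ) ^ j * (21/25) ^ j * (109/200) ^ i
          * (119/100) ^ (2 * m - i) * (119/100) ^ (2 * m))
      ≤ ((1 + 21/25 : ℝ) ^ 4 * (1 + 119/100) ^ 8 / (119/100) ^ 4) ^ m
      * ((21/25 : ℝ) ^ j * (21/25) ^ j * (109/200) ^ i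
          * (119/100) ^ (2 * m - i) * (119/100) ^ (2 * m)) := by
    refine le_trans (le_of_eq (by ring)) (hprod.trans key2)
  exact le_of_mul_le_mul_right hfin hD

theorem prob_bound_t4_q2 :
    ∃ N : ℕ, ∀ m : ℕ, N ≤ m →
      (((Finset.range (2 * m + 1)).sum
          (fun j => ((2 * m).choose j) ^ 2 *
            (Finset.range (j + 1)).sum
              (fun i => (j.choose i) * ((4 * m - j).choose (2 * m - i)) *
                ((4 * m - i).choose (2 * m)))) : ℕ) : ℝ) ≤
        (0.74 : ℝ) ^ m * (((4 * m).choose (2 * m) : ℝ)) ^ 3 := by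
  have hr : (1:ℝ) < 0.74 * 4096 / ((1 + 21/25 : ℝ) ^ 4 * (1 + 119/100) ^ 8 / (119/100) ^ 4) := by
    norm_num
  have ht := tendsto_pow_const_div_const_pow_of_one_lt 5 hr
  have hev := ht.eventually_lt_const (show (0:ℝ) < 1/3125 by norm_num)
  obtain ⟨N, hN⟩ := Filter.eventually_atTop.mp hev
  refine ⟨N + 1, fun m hm => ?_⟩
  have hm1 : 1 ≤ m := le_trans (Nat.le_add_left 1 N) hm
  have hNm : N ≤ m := le_trans (Nat.le_succ N) hm
  have h5 := hN m hNm
  -- abbreviations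
  set g : ℝ := (1 + 21/25 : ℝ) ^ 4 * (1 + 119/100) ^ 8 / (119/100) ^ 4 with hgdef
  set r : ℝ := 0.74 * 4096 / g with hrdef
  have hgpos : (0:ℝ) < g := by rw [hgdef]; positivity
  have hrpos : (0:ℝ) < r := lt_trans one_pos hr
  have hrmpos : (0:ℝ) < r ^ m := pow_pos hrpos m
  -- polynomial ≤ r ^ m
  have hm1R : (1:ℝ) ≤ (m:ℝ) := by exact_mod_cast hm1
  have hrm : ((2 * m + 1 : ℝ)) ^ 2 * ((4 * m + 1 : ℝ)) ^ 3 ≤ r ^ m := by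
    have h2 : (2 * m + 1 : ℝ) ≤ 5 * m := by linarith
    have h4 : (4 * m + 1 : ℝ) ≤ 5 * m := by linarith
    have hb : ((2 * m + 1 : ℝ)) ^ 2 * ((4 * m + 1 : ℝ)) ^ 3 ≤ (5 * (m:ℝ)) ^ 2 * (5 * (m:ℝ)) ^ 3 := by
      apply mul_le_mul (pow_le_pow_left₀ (by positivity) h2 2)
        (pow_le_pow_left₀ (by positivity) h4 3) (by positivity) (by positivity)
    have h6 : (m:ℝ) ^ 5 < (1/3125) * r ^ m := by
      rw [div_lt_iff₀ hrmpos] at h5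
      linarith
    calc ((2 * m + 1 : ℝ)) ^ 2 * ((4 * m + 1 : ℝ)) ^ 3 ≤ (5 * (m:ℝ)) ^ 2 * (5 * (m:ℝ)) ^ 3 := hb
      _ = 3125 * (m:ℝ) ^ 5 := by ring
      _ ≤ r ^ m := by
          have h7 := mul_lt_mul_of_pos_left h6 (show (0:ℝ) < 3125 by norm_num)
          have h8 : (3125:ℝ) * ((1/3125) * r ^ m) = r ^ m := by ring
          rw [h8] at h7
          exact le_of_lt h7
  -- central binomial lower bound
  have hCnat : 2 ^ (4 * m) ≤ (4 * m + 1) * ((4 * m).choose (2 * m)) := by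
    calc 2 ^ (4 * m) = ∑ k ∈ Finset.range (4 * m + 1), (4 * m).choose k :=
          (Nat.sum_range_choose (4 * m)).symm
      _ ≤ (Finset.range (4 * m + 1)).card • ((4 * m).choose (2 * m)) := by
          apply Finset.sum_le_card_nsmul
          intro k _
          have := Nat.choose_le_middle k (4 * m)
          rwa [show 4 * m / 2 = 2 * m by omega] at this
      _ = (4 * m + 1) * ((4 * m).choose (2 * m)) := by
          rw [Finset.card_range, smul_eq_mul]
  have hC : (2:ℝ) ^ (4 * m) ≤ (4 * m + 1 : ℝ) * (((4 * m).choose (2 * m) : ℕ) : ℝ) := by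
    exact_mod_cast hCnat
  have hC3 : (4096:ℝ) ^ m ≤ ((4 * m + 1 : ℝ)) ^ 3 * (((4 * m).choose (2 * m) : ℕ) : ℝ) ^ 3 := by
    have := pow_le_pow_left₀ (by positivity) hC 3
    calc (4096:ℝ) ^ m = ((2:ℝ) ^ (4 * m)) ^ 3 := by
          rw [← pow_mul, show 4 * m * 3 = 12 * m by ring, pow_mul]
          norm_num
      _ ≤ ((4 * m + 1 : ℝ) * (((4 * m).choose (2 * m) : ℕ) : ℝ)) ^ 3 := this
      _ = ((4 * m + 1 : ℝ)) ^ 3 * (((4 * m).choose (2 * m) : ℕ) : ℝ) ^ 3 := mul_pow _ _ _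
  -- bound the sum by (2m+1)^2 * g^m
  push_cast
  have hgm : (0:ℝ) ≤ g ^ m := le_of_lt (pow_pos hgpos m)
  have hS : ∑ j ∈ Finset.range (2 * m + 1), ((2 * m).choose j : ℝ) ^ 2 *
        ∑ i ∈ Finset.range (j + 1), ((j.choose i : ℝ) * (((4 * m - j).choose (2 * m - i)) : ℝ) *
          (((4 * m - i).choose (2 * m)) : ℝ))
      ≤ (2 * m + 1 : ℝ) * ((2 * m + 1 : ℝ) * g ^ m) := by
    calc ∑ j ∈ Finset.range (2 * m + 1), ((2 * m).choose j : ℝ) ^ 2 *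
          ∑ i ∈ Finset.range (j + 1), ((j.choose i : ℝ) * (((4 * m - j).choose (2 * m - i)) : ℝ) *
            (((4 * m - i).choose (2 * m)) : ℝ))
        ≤ ∑ j ∈ Finset.range (2 * m + 1), ((2 * m + 1 : ℝ) * g ^ m) := by
          apply Finset.sum_le_sum
          intro j hj
          have hj' : j ≤ 2 * m := by
            have := Finset.mem_range.mp hj; omega
          rw [Finset.mul_sum]
          calc ∑ i ∈ Finset.range (j + 1), ((2 * m).choose j : ℝ) ^ 2 *
                ((j.choose i : ℝ) * (((4 * m - j).choose (2 * m - i)) : ℝ) *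
                  (((4 * m - i).choose (2 * m)) : ℝ))
              ≤ ∑ i ∈ Finset.range (j + 1), g ^ m := by
                apply Finset.sum_le_sum
                intro i hi
                have hi' : i ≤ j := by
                  have := Finset.mem_range.mp hi; omega
                exact term_le_g_pow m j i hj' hi'
            _ = (j + 1 : ℝ) * g ^ m := by
                rw [Finset.sum_const, Finset.card_range, nsmul_eq_mul]
                push_cast
                ring
            _ ≤ (2 * m + 1 : ℝ) * g ^ m := by
                apply mul_le_mul_of_nonneg_right _ hgm
                have : (j:ℝ) ≤ 2 * m := by exact_mod_cast hj'
                linarith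
      _ = (2 * m + 1 : ℝ) * ((2 * m + 1 : ℝ) * g ^ m) := by
          rw [Finset.sum_const, Finset.card_range, nsmul_eq_mul]
          push_cast
          ring
  refine le_trans hS ?_
  -- final comparison
  have hpos3 : (0:ℝ) < ((4 * m + 1 : ℝ)) ^ 3 := by positivity
  rw [← mul_le_mul_iff_left₀ hpos3]
  have hrg : r * g = (0.74:ℝ) * 4096 := by
    rw [hrdef]
    field_simp
  calc (2 * m + 1 : ℝ) * ((2 * m + 1 : ℝ) * g ^ m) * ((4 * m + 1 : ℝ)) ^ 3
      = (((2 * m + 1 : ℝ)) ^ 2 * ((4 * m + 1 : ℝ)) ^ 3) * g ^ m := by ring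
    _ ≤ r ^ m * g ^ m := mul_le_mul_of_nonneg_right hrm hgm
    _ = (0.74:ℝ) ^ m * 4096 ^ m := by
        rw [← mul_pow, hrg, mul_pow]
    _ ≤ (0.74:ℝ) ^ m * (((4 * m + 1 : ℝ)) ^ 3 * (((4 * m).choose (2 * m) : ℕ) : ℝ) ^ 3) := by
        apply mul_le_mul_of_nonneg_left hC3 (by positivity)
    _ = (0.74:ℝ) ^ m * (((4 * m).choose (2 * m) : ℕ) : ℝ) ^ 3 * ((4 * m + 1 : ℝ)) ^ 3 := by ring
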